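/- Let p be an odd prime and g a polynomial with integer coefficients. The number of solutions x with 1 ≤ x ≤ p(p-1), p ∤ x, to x^(g(x)) ≡ x (mod p) equals the sum over x0 from 1 to p-1 of gcd(p-1, g(x0)-1). -/

import Mathlib

private lemma gcd_congr_int {m a b : ℤ} (h : m ∣ a - b) : Int.gcd m a = Int.gcd m b := by
  have key : ∀ a b : ℤ, m ∣ a - b → Int.gcd m a ∣ Int.gcd m b := by
    intro a b h
    rw [← Int.natCast_dvd_natCast]
    refine Int.dvd_coe_gcd (Int.gcd_dvd_left _ _) ?_
    have h1 : (Int.gcd m a : ℤ) ∣ a - b := dvd_trans (Int.gcd_dvd_left _ _) h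
    have h2 : (Int.gcd m a : ℤ) ∣ a := Int.gcd_dvd_right _ _
    simpa [sub_sub_cancel] using h2.sub h1
  exact Nat.dvd_antisymm (key a b h) (key b a (by simpa using h.neg_right))

private lemma cond_iff {p : ℕ} [Fact p.Prime] {a : ZMod p} (ha : a ≠ 0) (e : ℤ) :
    a ^ e = a ↔ a ^ (Int.gcd ((p - 1 : ℕ) : ℤ) (e - 1)) = 1 := by
  lift a to (ZMod p)ˣ using ha.isUnit
  rw [← Units.val_zpow_eq_zpow_val, ← Units.val_pow_eq_pow_val, Units.val_eq_one]
  have h1 : (↑(a ^ e) : ZMod p) = ↑a ↔ a ^ e = a := ⟨fun h => Units.ext h, fun h => by rw [h]⟩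
  rw [h1]
  have ho : orderOf a ∣ p - 1 := (ZMod.card_units p) ▸ orderOf_dvd_card
  have h2 : a ^ e = a ↔ (orderOf a : ℤ) ∣ e - 1 := by
    rw [orderOf_dvd_iff_zpow_eq_one, zpow_sub, zpow_one, mul_inv_eq_one]
  rw [h2, ← orderOf_dvd_iff_pow_eq_one]
  constructor
  · intro h
    exact Int.natCast_dvd_natCast.mp (Int.dvd_coe_gcd (Int.natCast_dvd_natCast.mpr ho) h)
  · intro h
    exact dvd_trans (Int.natCast_dvd_natCast.mpr h) (Int.gcd_dvd_right _ _)

theorem stmt_2 (p : ℕ) [Fact p.Prime] (hp2 : p ≠ 2) (g : Polynomial ℤ) :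
    ((Finset.Icc 1 (p * (p - 1))).filter fun x : ℕ =>
        ¬ p ∣ x ∧ (x : ZMod p) ^ (g.eval (x : ℤ)) = (x : ZMod p)).card =
      ∑ x0 ∈ Finset.Icc 1 (p - 1), Int.gcd ((p : ℤ) - 1) (g.eval (x0 : ℤ) - 1) := by
  classical
  have hp := Fact.out (p := p.Prime)
  haveI : NeZero p := ⟨hp.pos.ne'⟩
  have hp3 : 3 ≤ p := by
    rcases hp.two_le.lt_or_eq with h | h
    · omega
    · exact absurd h.symm hp2
  set m := p - 1 with hm
  have hm2 : 2 ≤ m := by omega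
  have hcop : Nat.Coprime p m := by
    refine (Nat.Prime.coprime_iff_not_dvd hp).mpr fun hd => ?_
    have := Nat.le_of_dvd (by omega) hd
    omega
  set N := p * m with hN
  have hN3 : 3 ≤ N := le_trans hp3 (Nat.le_mul_of_pos_right p (by omega))
  have hmN : m ∣ N := dvd_mul_left m p
  have hpN : p ∣ N := dvd_mul_right p m
  -- characterization of fibers
  have hmod : ∀ x b : ℕ, 1 ≤ x → 1 ≤ b → b ≤ m → ((x - 1) % m + 1 = b ↔ x ≡ b [MOD m]) := by
    intro x b hx hb1 hb2
    constructor
    · intro h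
      have h1 : (x - 1) ≡ b - 1 [MOD m] := by
        have := (Nat.mod_modEq (x - 1) m).symm
        rwa [show (x - 1) % m = b - 1 by omega] at this
      have h2 := h1.add_right 1
      rwa [show x - 1 + 1 = x by omega, show b - 1 + 1 = b by omega] at h2
    · intro h
      have h1 : (x - 1) + 1 ≡ (b - 1) + 1 [MOD m] := by
        rwa [show x - 1 + 1 = x by omega, show b - 1 + 1 = b by omega]
      have h2 := Nat.ModEq.add_right_cancel' 1 h1
      have h3 : (x - 1) % m = (b - 1) % m := h2
      rw [show (b - 1) % m = b - 1 from Nat.mod_eq_of_lt (by omega)] at h3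
      omega
  -- congruence of the gcd along the fiber
  have hgcd : ∀ x b : ℕ, x ≡ b [MOD m] →
      Int.gcd ((m : ℕ) : ℤ) (g.eval (x : ℤ) - 1) = Int.gcd ((m : ℕ) : ℤ) (g.eval (b : ℤ) - 1) := by
    intro x b hxb
    apply gcd_congr_int
    have h1 : ((m : ℕ) : ℤ) ∣ (x : ℤ) - (b : ℤ) := by
      rcases le_total b x with h | h
      · have := (Nat.modEq_iff_dvd' h).mp hxb.symm
        have h2 : ((m : ℕ) : ℤ) ∣ ((x - b : ℕ) : ℤ) := Int.natCast_dvd_natCast.mpr this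
        rwa [Nat.cast_sub h] at h2
      · have := (Nat.modEq_iff_dvd' h).mp hxb
        have h2 : ((m : ℕ) : ℤ) ∣ ((b - x : ℕ) : ℤ) := Int.natCast_dvd_natCast.mpr this
        rw [Nat.cast_sub h] at h2
        simpa using h2.neg_right
    have h2 : ((x : ℤ) - (b : ℤ)) ∣ (g.eval (x : ℤ) - g.eval (b : ℤ)) :=
      Polynomial.sub_dvd_eval_sub _ _ g
    have h3 := h1.trans h2
    have : (g.eval (x : ℤ) - 1) - (g.eval (b : ℤ) - 1) = g.eval (x : ℤ) - g.eval (b : ℤ) := by ring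
    rwa [this]
  have hcast : ((p : ℤ) - 1) = ((m : ℕ) : ℤ) := by
    have : (1 : ℤ) ≤ (p : ℤ) := by exact_mod_cast hp.one_lt.le
    push_cast [hm, Nat.cast_sub hp.one_lt.le]
    ring
  rw [Finset.card_eq_sum_card_fiberwise (f := fun x => (x - 1) % m + 1)
      (t := Finset.Icc 1 m) (fun x _ => by
        simp only [Finset.mem_Icc]
        have := Nat.mod_lt (x - 1) (show 0 < m by omega)
        exact Finset.mem_Icc.mpr ⟨Nat.le_add_left 1 _, Nat.succ_le_of_lt this⟩)]
  refine Finset.sum_congr rfl fun b hb => ?_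
  rw [Finset.mem_Icc] at hb
  obtain ⟨hb1, hb2⟩ := hb
  set d : ℕ := Int.gcd ((m : ℕ) : ℤ) (g.eval (b : ℤ) - 1) with hd
  have hrhs : Int.gcd ((p : ℤ) - 1) (g.eval (b : ℤ) - 1) = d := by rw [hcast]
  rw [hrhs]
  have hd0 : 0 < d := by
    rw [hd, Int.gcd_pos_iff]
    left
    simpa using (by omega : m ≠ 0)
  have hdm : d ∣ m := by
    have := Int.gcd_dvd_left (a := ((m : ℕ) : ℤ)) (b := g.eval (b : ℤ) - 1)
    exact_mod_cast this
  -- primitive root of order d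
  obtain ⟨u, hu⟩ := IsCyclic.exists_generator (α := (ZMod p)ˣ)
  have hord : orderOf u = m := by
    have := orderOf_eq_card_of_forall_mem_zpowers hu
    rwa [Nat.card_eq_fintype_card, ZMod.card_units p] at this
  have hprim : IsPrimitiveRoot ((u : (ZMod p)ˣ) : ZMod p) m := by
    have := IsPrimitiveRoot.orderOf ((u : (ZMod p)ˣ) : ZMod p)
    rwa [orderOf_units, hord] at this
  have hprimd : IsPrimitiveRoot (((u : (ZMod p)ˣ) : ZMod p) ^ (m / d)) d :=
    hprim.pow (by omega) (Nat.div_mul_cancel hdm).symm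
  rw [← hprimd.card_nthRootsFinset]
  -- the bijection
  refine Finset.card_bij (fun x _ => (x : ZMod p)) ?_ ?_ ?_
  · -- maps into nthRootsFinset
    intro x hx
    simp only [Finset.mem_filter, Finset.mem_Icc] at hx
    obtain ⟨⟨⟨hx1, hx2⟩, hnd, hcond⟩, hfib⟩ := hx
    have hxb : x ≡ b [MOD m] := (hmod x b hx1 hb1 hb2).mp hfib
    have hx0 : (x : ZMod p) ≠ 0 := fun h =>
      hnd ((ZMod.natCast_eq_zero_iff x p).mp h)
    rw [Polynomial.mem_nthRootsFinset hd0]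
    have := (cond_iff hx0 (g.eval (x : ℤ))).mp hcond
    rwa [← hm, hgcd x b hxb, ← hd] at this
  · -- injective
    intro x hx y hy hxy
    simp only [Finset.mem_filter, Finset.mem_Icc] at hx hy
    obtain ⟨⟨⟨hx1, hx2⟩, hxnd, _⟩, hxfib⟩ := hx
    obtain ⟨⟨⟨hy1, hy2⟩, hynd, _⟩, hyfib⟩ := hy
    have hxp : x ≡ y [MOD p] := (ZMod.natCast_eq_natCast_iff x y p).mp hxy
    have hxm : x ≡ y [MOD m] :=
      ((hmod x b hx1 hb1 hb2).mp hxfib).trans ((hmod y b hy1 hb1 hb2).mp hyfib).symm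
    have hxN : x ≡ y [MOD N] := (Nat.modEq_and_modEq_iff_modEq_mul hcop).mp ⟨hxp, hxm⟩
    rcases le_total x y with h | h
    · have hdvd := (Nat.modEq_iff_dvd' h).mp hxN
      rcases Nat.eq_zero_or_pos (y - x) with h0 | h0
      · omega
      · have := Nat.le_of_dvd h0 hdvd; omega
    · have hdvd := (Nat.modEq_iff_dvd' h).mp hxN.symm
      rcases Nat.eq_zero_or_pos (x - y) with h0 | h0
      · omega
      · have := Nat.le_of_dvd h0 hdvd; omega
  · -- surjective
    intro a haroot
    rw [Polynomial.mem_nthRootsFinset hd0] at haroot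
    have ha0 : a ≠ 0 := by
      intro h
      rw [h, zero_pow hd0.ne'] at haroot
      exact zero_ne_one haroot
    obtain ⟨k, hk1, hk2⟩ := Nat.chineseRemainder hcop (ZMod.val a) b
    set x := (k + (N - 1)) % N + 1 with hxdef
    have hx1 : 1 ≤ x := by omega
    have hx2 : x ≤ N := by
      have := Nat.mod_lt (k + (N - 1)) (show 0 < N by omega)
      omega
    have hxk : x ≡ k [MOD N] := by
      have h1 : x ≡ (k + (N - 1)) + 1 [MOD N] := (Nat.mod_modEq (k + (N - 1)) N).add_right 1
      have h2 : (k + (N - 1)) + 1 = k + N := by omega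
      rw [h2] at h1
      have h3 : k + N ≡ k + 0 [MOD N] :=
        Nat.ModEq.add_left k ((Nat.modEq_zero_iff_dvd).mpr dvd_rfl)
      simpa using h1.trans h3
    have hxp : x ≡ ZMod.val a [MOD p] := (Nat.ModEq.of_dvd hpN hxk).trans hk1
    have hxm : x ≡ b [MOD m] := (Nat.ModEq.of_dvd hmN hxk).trans hk2
    have hcastx : (x : ZMod p) = a := by
      rw [(ZMod.natCast_eq_natCast_iff x (ZMod.val a) p).mpr hxp, ZMod.natCast_zmod_val]
    have hnd : ¬ p ∣ x := by
      intro h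
      rw [← (ZMod.natCast_eq_zero_iff x p)] at h
      exact ha0 (hcastx ▸ h)
    refine ⟨x, ?_, hcastx⟩
    simp only [Finset.mem_filter, Finset.mem_Icc]
    refine ⟨⟨⟨hx1, hx2⟩, hnd, ?_⟩, (hmod x b hx1 hb1 hb2).mpr hxm⟩
    rw [cond_iff (hcastx ▸ ha0) (g.eval (x : ℤ)), ← hm, hgcd x b hxm, ← hd, hcastx]
    exact haroot
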